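/- Let n = 1, r', s' nonnegative integers with s' ≥ 1, and define V_{0,s'}(T) as the volume of {(y_1,…,y_{s'}) ∈ ℂ^{s'} : ∏|y_j|² ≤ T, |y_j| ≥ 1 for all j} for T ≥ 1. Then V_{0,s'}(T) = π^{s'} ( (−1)^{s'} + Σ_{i=0}^{s'−1} (−1)^{s'−1−i} T (log T)^i / i! ). -/

import Mathlib

open MeasureTheory Real Set

noncomputable def Fm (s : ℕ) (T : ℝ) : ℝ :=
  π ^ s * ((-1 : ℝ) ^ s +
    ∑ i ∈ Finset.range s,
      (-1 : ℝ) ^ (s - 1 - i) * T * (Real.log T) ^ i / (Nat.factorial i))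

def Sset (s : ℕ) (T : ℝ) : Set (Fin s → ℂ) :=
  {y | (∏ j, ‖(y j)‖ ^ 2) ≤ T ∧ ∀ j, 1 ≤ ‖(y j)‖}

lemma Sset_empty {s : ℕ} {T : ℝ} (hT : T < 1) : Sset s T = ∅ := by
  ext y
  simp only [Sset, Set.mem_setOf_eq, Set.mem_empty_iff_false, iff_false, not_and]
  intro h1 h2
  have : (1 : ℝ) ≤ ∏ j, ‖(y j)‖ ^ 2 := by
    calc (1 : ℝ) = ∏ _j : Fin s, (1 : ℝ) := by simp
      _ ≤ ∏ j, ‖(y j)‖ ^ 2 :=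
        Finset.prod_le_prod (by intros; norm_num) fun j _ => one_le_pow₀ (h2 j)
  linarith

lemma Fm_continuousOn (s : ℕ) : ContinuousOn (Fm s) {x : ℝ | x ≠ 0} := by
  unfold Fm
  refine continuousOn_const.mul (continuousOn_const.add ?_)
  refine continuousOn_finset_sum _ fun i _ => ?_
  exact ((continuousOn_const.mul continuousOn_id).mul
    ((Real.continuousOn_log.mono (by intro x hx; exact hx)).pow i)).div_const _

lemma Fm_zero {T : ℝ} : Fm 0 T = 1 := by simp [Fm]

/-- Recursion via Fubini. -/
lemma vol_succ (s : ℕ) (T : ℝ) :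
    volume (Sset (s + 1) T) =
      ∫⁻ z : ℂ, Set.indicator {z : ℂ | 1 ≤ ‖z‖}
        (fun z => volume (Sset s (T / ‖z‖ ^ 2))) z := by
  classical
  set B : Set (ℂ × (Fin s → ℂ)) :=
    {p | 1 ≤ ‖p.1‖ ∧ p.2 ∈ Sset s (T / ‖p.1‖ ^ 2)} with hBdef
  have habs : Measurable (norm : ℂ → ℝ) := continuous_norm.measurable
  have hB : MeasurableSet B := by
    have : B = {p : ℂ × (Fin s → ℂ) | 1 ≤ ‖p.1‖} ∩
        ({p : ℂ × (Fin s → ℂ) |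
          (∏ j, ‖(p.2 j)‖ ^ 2) ≤ T / ‖p.1‖ ^ 2} ∩
         ⋂ j, {p : ℂ × (Fin s → ℂ) | 1 ≤ ‖(p.2 j)‖}) := by
      ext p; simp [hBdef, Sset, Set.mem_iInter, and_assoc]
    rw [this]
    refine MeasurableSet.inter ?_ (MeasurableSet.inter ?_
      (MeasurableSet.iInter fun j => ?_))
    · exact measurableSet_le measurable_const (habs.comp measurable_fst)
    · refine measurableSet_le
        (Finset.measurable_prod _ fun j _ =>
          ((habs.comp ((measurable_pi_apply j).comp measurable_snd)).pow_const 2)) ?_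
      exact Measurable.div measurable_const
        ((habs.comp measurable_fst).pow_const 2)
    · exact measurableSet_le measurable_const
        (habs.comp ((measurable_pi_apply j).comp measurable_snd))
  have hpre : Sset (s + 1) T =
      (MeasurableEquiv.piFinSuccAbove (fun _ : Fin (s + 1) => ℂ) 0) ⁻¹' B := by
    ext f
    have he : (MeasurableEquiv.piFinSuccAbove (fun _ : Fin (s + 1) => ℂ) 0) f =
        (f 0, fun j : Fin s => f j.succ) := by
      simp only [MeasurableEquiv.piFinSuccAbove_apply, Fin.removeNth_zero]
      rfl
    simp only [Set.mem_preimage, he, hBdef, Set.mem_setOf_eq, Sset]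
    constructor
    · rintro ⟨h1, h2⟩
      have h0 : 1 ≤ ‖(f 0)‖ := h2 0
      have hpos : (0 : ℝ) < ‖(f 0)‖ ^ 2 := by positivity
      refine ⟨h0, ?_, fun j => h2 j.succ⟩
      rw [le_div_iff₀ hpos]
      calc (∏ j : Fin s, ‖(f j.succ)‖ ^ 2) * ‖(f 0)‖ ^ 2
          = ∏ j : Fin (s + 1), ‖(f j)‖ ^ 2 := by
            rw [Fin.prod_univ_succ]; ring
        _ ≤ T := h1
    · rintro ⟨h0, h1, h2⟩
      have hpos : (0 : ℝ) < ‖(f 0)‖ ^ 2 := by positivity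
      rw [le_div_iff₀ hpos] at h1
      refine ⟨?_, fun j => ?_⟩
      · calc ∏ j : Fin (s + 1), ‖(f j)‖ ^ 2
            = (∏ j : Fin s, ‖(f j.succ)‖ ^ 2) * ‖(f 0)‖ ^ 2 := by
              rw [Fin.prod_univ_succ]; ring
          _ ≤ T := h1
      · rcases Fin.eq_zero_or_eq_succ j with h | ⟨k, rfl⟩
        · rw [h]; exact h0
        · exact h2 k
  have hmp := volume_preserving_piFinSuccAbove (fun _ : Fin (s + 1) => ℂ) 0
  rw [hpre, hmp.measure_preimage hB.nullMeasurableSet]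
  rw [Measure.volume_eq_prod, Measure.prod_apply hB]
  congr 1
  funext z
  by_cases h1 : 1 ≤ ‖z‖
  · rw [Set.indicator_of_mem (show z ∈ {z : ℂ | 1 ≤ ‖z‖} from h1)]
    congr 1
    ext w
    simp [hBdef, h1, Sset]
  · rw [Set.indicator_of_notMem (show z ∉ {z : ℂ | 1 ≤ ‖z‖} from h1)]
    have : Prod.mk z ⁻¹' B = ∅ := by
      ext w
      simp only [Set.mem_preimage, hBdef, Set.mem_setOf_eq, Set.mem_empty_iff_false, iff_false]
      exact fun h => h1 h.1
    rw [this, measure_empty]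

/-- Inner integral: ∫_1^T (T/u)(log T - log u)^i du = T (log T)^{i+1} / (i+1). -/
lemma inner_integral (T : ℝ) (hT : 1 ≤ T) (i : ℕ) :
    ∫ u in (1 : ℝ)..T, (1 / u) * (Real.log T - Real.log u) ^ i =
      Real.log T ^ (i + 1) / (i + 1) := by
  have hderiv : ∀ u ∈ Set.uIcc (1 : ℝ) T, HasDerivAt Real.log (1 / u) u := by
    intro u hu
    rw [Set.uIcc_of_le hT] at hu
    have : u ≠ 0 := by intro h; rw [h] at hu; linarith [hu.1]
    simpa [one_div] using Real.hasDerivAt_log this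
  have hcont' : ContinuousOn (fun u : ℝ => 1 / u) (Set.uIcc 1 T) := by
    rw [Set.uIcc_of_le hT]
    refine continuousOn_const.div continuousOn_id fun u hu => ?_
    intro h; rw [h] at hu; linarith [hu.1]
  have hg : Continuous fun v : ℝ => (Real.log T - v) ^ i :=
    (continuous_const.sub continuous_id).pow i
  have := intervalIntegral.integral_comp_smul_deriv hderiv hcont' hg
  simp only [smul_eq_mul, Function.comp] at this
  rw [this, Real.log_one]
  rw [intervalIntegral.integral_comp_sub_left (fun x => x ^ i) (Real.log T)]
  simp [integral_pow]

lemma middle_integral (s : ℕ) (T : ℝ) (hT : 1 ≤ T) :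
    ∫ u in (1 : ℝ)..T, Fm s (T / u) =
      π ^ s * ((-1 : ℝ) ^ s * (T - 1) +
        ∑ i ∈ Finset.range s,
          (-1 : ℝ) ^ (s - 1 - i) * T * Real.log T ^ (i + 1) /
            ((Nat.factorial i) * (i + 1))) := by
  have hT0 : (0 : ℝ) < T := by linarith
  have hIcc : Set.uIcc (1 : ℝ) T = Set.Icc 1 T := Set.uIcc_of_le hT
  have hterm_int : ∀ i : ℕ, IntervalIntegrable
      (fun u => (-1 : ℝ) ^ (s - 1 - i) * (T / u) * (Real.log T - Real.log u) ^ i /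
        (Nat.factorial i)) volume 1 T := by
    intro i
    refine ContinuousOn.intervalIntegrable ?_
    rw [hIcc]
    have hne : ∀ u ∈ Set.Icc (1 : ℝ) T, u ≠ 0 := by
      intro u hu h; rw [h] at hu; linarith [hu.1]
    refine (((continuousOn_const.mul
      (continuousOn_const.div continuousOn_id hne)).mul
      ((continuousOn_const.sub (Real.continuousOn_log.mono ?_)).pow i)).div_const _)
    intro u hu
    exact hne u hu
  have hpt : ∀ u ∈ Set.uIcc (1 : ℝ) T, Fm s (T / u) =
      π ^ s * ((-1 : ℝ) ^ s + ∑ i ∈ Finset.range s,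
        (-1 : ℝ) ^ (s - 1 - i) * (T / u) * (Real.log T - Real.log u) ^ i /
          (Nat.factorial i)) := by
    intro u hu
    rw [hIcc] at hu
    have hu0 : (0 : ℝ) < u := lt_of_lt_of_le one_pos hu.1
    rw [Fm, Real.log_div (ne_of_gt hT0) (ne_of_gt hu0)]
  rw [intervalIntegral.integral_congr hpt]
  rw [intervalIntegral.integral_const_mul]
  congr 1
  have hsum_int : IntervalIntegrable
      (fun u => ∑ i ∈ Finset.range s,
        (-1 : ℝ) ^ (s - 1 - i) * (T / u) * (Real.log T - Real.log u) ^ i /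
          (Nat.factorial i)) volume 1 T := by
    have : (fun u => ∑ i ∈ Finset.range s,
        (-1 : ℝ) ^ (s - 1 - i) * (T / u) * (Real.log T - Real.log u) ^ i /
          (Nat.factorial i)) = ∑ i ∈ Finset.range s, fun u =>
        (-1 : ℝ) ^ (s - 1 - i) * (T / u) * (Real.log T - Real.log u) ^ i /
          (Nat.factorial i) := by
      funext u; simp
    rw [this]
    exact IntervalIntegrable.sum _ fun i _ => hterm_int i
  rw [intervalIntegral.integral_add intervalIntegrable_const hsum_int]
  congr 1
  · simp [mul_comm]
  · rw [intervalIntegral.integral_finset_sum fun i _ => hterm_int i]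
    refine Finset.sum_congr rfl fun i _ => ?_
    have : ∀ u : ℝ, (-1 : ℝ) ^ (s - 1 - i) * (T / u) * (Real.log T - Real.log u) ^ i /
        (Nat.factorial i) =
        ((-1 : ℝ) ^ (s - 1 - i) * T / (Nat.factorial i)) *
          ((1 / u) * (Real.log T - Real.log u) ^ i) := by
      intro u; ring
    simp_rw [this]
    rw [intervalIntegral.integral_const_mul, inner_integral T hT i]
    have hfac : ((Nat.factorial i : ℝ)) ≠ 0 := Nat.cast_ne_zero.2 (Nat.factorial_ne_zero i)
    have hi1 : ((i : ℝ) + 1) ≠ 0 := by positivity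
    field_simp

lemma main_lemma (s : ℕ) : ∀ T : ℝ, 1 ≤ T →
    volume (Sset s T) = ENNReal.ofReal (Fm s T) ∧ 0 ≤ Fm s T := by
  induction s with
  | zero =>
    intro T hT
    have huniv : Sset 0 T = Set.univ := by
      ext y
      simp [Sset, hT]
    rw [huniv, Fm_zero]
    refine ⟨?_, zero_le_one⟩
    rw [ENNReal.ofReal_one]
    simp [volume_pi, Measure.pi_univ]
  | succ s ih =>
    intro T hT
    have hT0 : (0 : ℝ) < T := by linarith
    have habs : Measurable (norm : ℂ → ℝ) := continuous_norm.measurable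
    have hsqrt1 : (1 : ℝ) ≤ Real.sqrt T := by
      rw [show (1 : ℝ) = Real.sqrt 1 by simp]
      exact Real.sqrt_le_sqrt hT
    set A : Set ℂ := {z : ℂ | 1 ≤ ‖z‖} ∩ {z : ℂ | ‖z‖ ^ 2 ≤ T} with hA
    have hAmeas : MeasurableSet A :=
      (measurableSet_le measurable_const habs).inter
        (measurableSet_le (habs.pow_const 2) measurable_const)
    set g : ℂ → ℝ := A.indicator (fun z => Fm s (T / ‖z‖ ^ 2)) with hgdef
    -- Step 1: volume = lintegral of ofReal g
    have step1 : volume (Sset (s + 1) T) = ∫⁻ z : ℂ, ENNReal.ofReal (g z) := by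
      rw [vol_succ]
      congr 1
      funext z
      by_cases h1 : 1 ≤ ‖z‖
      · rw [Set.indicator_of_mem (show z ∈ {z : ℂ | 1 ≤ ‖z‖} from h1)]
        have hpos : (0 : ℝ) < ‖z‖ ^ 2 := by positivity
        by_cases h2 : ‖z‖ ^ 2 ≤ T
        · have h3 : 1 ≤ T / ‖z‖ ^ 2 := (one_le_div hpos).2 h2
          rw [(ih _ h3).1, hgdef,
            Set.indicator_of_mem (show z ∈ A from ⟨h1, h2⟩)]
        · have h3 : T / ‖z‖ ^ 2 < 1 := (div_lt_one hpos).2 (lt_of_not_ge h2)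
          rw [Sset_empty h3, measure_empty, hgdef,
            Set.indicator_of_notMem (show z ∉ A from fun h => h2 h.2)]
          simp
      · rw [Set.indicator_of_notMem (show z ∉ {z : ℂ | 1 ≤ ‖z‖} from h1),
          hgdef, Set.indicator_of_notMem (show z ∉ A from fun h => h1 h.1)]
        simp
    -- nonnegativity of g
    have hg_nonneg : ∀ z, 0 ≤ g z := by
      intro z
      refine Set.indicator_nonneg (fun z hz => ?_) z
      have h1 : (1 : ℝ) ≤ ‖z‖ := hz.1
      have h2 : ‖z‖ ^ 2 ≤ T := hz.2
      have hpos : (0 : ℝ) < ‖z‖ ^ 2 := by positivity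
      exact (ih _ ((one_le_div hpos).2 h2)).2
    -- compactness of A
    have hAsub : A ⊆ Metric.closedBall (0 : ℂ) (Real.sqrt T) := by
      intro z hz
      rw [Metric.mem_closedBall, dist_zero_right]
      exact (Real.le_sqrt (norm_nonneg z) hT0.le).2 (hz.2 : ‖z‖ ^ 2 ≤ T)
    have hAcompact : IsCompact A := by
      refine (isCompact_closedBall (0 : ℂ) (Real.sqrt T)).of_isClosed_subset ?_ hAsub
      exact (isClosed_le continuous_const continuous_norm).inter
        (isClosed_le (continuous_norm.pow 2) continuous_const)
    -- continuity on A
    have hcontOn : ContinuousOn (fun z : ℂ => Fm s (T / ‖z‖ ^ 2)) A := by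
      refine (Fm_continuousOn s).comp ?_ ?_
      · refine continuousOn_const.div ((continuous_norm.pow 2).continuousOn) ?_
        intro z hz
        have h1 : (1 : ℝ) ≤ ‖z‖ := hz.1
        positivity
      · intro z hz
        have h1 : (1 : ℝ) ≤ ‖z‖ := hz.1
        have hpos : (0 : ℝ) < ‖z‖ ^ 2 := by positivity
        exact ne_of_gt (div_pos hT0 hpos)
    have hInt : Integrable g :=
      (integrable_indicator_iff hAmeas).2 (hcontOn.integrableOn_compact hAcompact)
    have hlin : ∫⁻ z : ℂ, ENNReal.ofReal (g z) = ENNReal.ofReal (∫ z : ℂ, g z) :=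
      (ofReal_integral_eq_lintegral_ofReal hInt
        (Filter.Eventually.of_forall hg_nonneg)).symm
    -- radial reduction
    set f0 : ℝ → ℝ := Set.indicator (Set.Icc 1 (Real.sqrt T)) (fun r => Fm s (T / r ^ 2))
      with hf0
    have hgf : ∀ z : ℂ, g z = f0 ‖z‖ := by
      intro z
      have hmem : z ∈ A ↔ ‖z‖ ∈ Set.Icc 1 (Real.sqrt T) := by
        constructor
        · rintro ⟨h1, h2⟩
          exact ⟨h1, (Real.le_sqrt (norm_nonneg z) hT0.le).2
            (h2 : ‖z‖ ^ 2 ≤ T)⟩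
        · rintro ⟨h1, h2⟩
          exact ⟨h1, (Real.le_sqrt (norm_nonneg z) hT0.le).1 h2⟩
      by_cases hz : z ∈ A
      · rw [hgdef, Set.indicator_of_mem hz, hf0, Set.indicator_of_mem (hmem.1 hz)]
      · rw [hgdef, Set.indicator_of_notMem hz, hf0,
          Set.indicator_of_notMem (fun h => hz (hmem.2 h))]
    have hradial : ∫ z : ℂ, g z = 2 * (π * ∫ y in Set.Ioi (0 : ℝ), y * f0 y) := by
      simp_rw [hgf]
      rw [integral_fun_norm_addHaar (volume : Measure ℂ) f0, Complex.finrank_real_complex]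
      have hball : (volume.real (Metric.ball (0 : ℂ) 1)) = π := by
        rw [measureReal_def, Complex.volume_ball]
        simp
      rw [hball]
      simp only [nsmul_eq_mul, smul_eq_mul, Nat.cast_ofNat]
      congr 2
      refine setIntegral_congr_fun measurableSet_Ioi fun y _ => ?_
      simp [pow_one]
    have hIoi : ∫ y in Set.Ioi (0 : ℝ), y * f0 y =
        ∫ y in (1 : ℝ)..(Real.sqrt T), y * Fm s (T / y ^ 2) := by
      have h1 : ∀ y : ℝ, y * f0 y =
          Set.indicator (Set.Icc 1 (Real.sqrt T)) (fun y => y * Fm s (T / y ^ 2)) y := by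
        intro y
        by_cases h : y ∈ Set.Icc 1 (Real.sqrt T)
        · rw [hf0, Set.indicator_of_mem h, Set.indicator_of_mem h]
        · rw [hf0, Set.indicator_of_notMem h, Set.indicator_of_notMem h, mul_zero]
      simp_rw [h1]
      rw [MeasureTheory.setIntegral_indicator measurableSet_Icc]
      have h2 : Set.Ioi (0 : ℝ) ∩ Set.Icc 1 (Real.sqrt T) = Set.Icc 1 (Real.sqrt T) :=
        Set.inter_eq_self_of_subset_right fun y hy => lt_of_lt_of_le one_pos hy.1
      rw [h2, MeasureTheory.integral_Icc_eq_integral_Ioc,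
        ← intervalIntegral.integral_of_le hsqrt1]
    have hsubst : (2 : ℝ) * ∫ y in (1 : ℝ)..(Real.sqrt T), y * Fm s (T / y ^ 2) =
        ∫ u in (1 : ℝ)..T, Fm s (T / u) := by
      have hderiv : ∀ y ∈ Set.uIcc (1 : ℝ) (Real.sqrt T),
          HasDerivAt (fun y : ℝ => y ^ 2) (2 * y) y := by
        intro y _
        simpa using hasDerivAt_pow 2 y
      have hcont2 : ContinuousOn (fun y : ℝ => 2 * y) (Set.uIcc 1 (Real.sqrt T)) :=
        (continuous_const.mul continuous_id).continuousOn
      have hge : ContinuousOn (fun u : ℝ => Fm s (T / u)) {u : ℝ | 1 ≤ u} := by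
        refine (Fm_continuousOn s).comp
          (continuousOn_const.div continuousOn_id fun u hu => by
            intro h
            simp only [Set.mem_setOf_eq] at hu
            rw [h] at hu; linarith) ?_
        intro u hu
        simp only [Set.mem_setOf_eq] at hu ⊢
        exact ne_of_gt (div_pos hT0 (lt_of_lt_of_le one_pos hu))
      have hgcont : ContinuousOn (fun u : ℝ => Fm s (T / u))
          ((fun y : ℝ => y ^ 2) '' Set.uIcc 1 (Real.sqrt T)) := by
        refine hge.mono ?_
        rintro u ⟨y, hy, rfl⟩
        rw [Set.uIcc_of_le hsqrt1] at hy
        exact one_le_pow₀ hy.1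
      have key := intervalIntegral.integral_comp_smul_deriv' hderiv hcont2 hgcont
      rw [one_pow, Real.sq_sqrt hT0.le] at key
      rw [← key, ← intervalIntegral.integral_const_mul]
      refine intervalIntegral.integral_congr fun y _ => ?_
      simp only [smul_eq_mul, Function.comp]
      ring
    -- final formula
    have hFeq : ∫ z : ℂ, g z = Fm (s + 1) T := by
      rw [hradial, hIoi]
      rw [show (2 : ℝ) * (π * ∫ y in (1 : ℝ)..(Real.sqrt T), y * Fm s (T / y ^ 2)) =
        π * ((2 : ℝ) * ∫ y in (1 : ℝ)..(Real.sqrt T), y * Fm s (T / y ^ 2)) by ring]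
      rw [hsubst, middle_integral s T hT, Fm]
      rw [Finset.sum_range_succ']
      have hterm : ∀ i ∈ Finset.range s,
          (-1 : ℝ) ^ (s + 1 - 1 - (i + 1)) * T * Real.log T ^ (i + 1) /
            (Nat.factorial (i + 1)) =
          (-1 : ℝ) ^ (s - 1 - i) * T * Real.log T ^ (i + 1) /
            ((Nat.factorial i) * (i + 1)) := by
        intro i _
        have h1 : s + 1 - 1 - (i + 1) = s - 1 - i := by omega
        rw [h1, Nat.factorial_succ]
        push_cast
        ring
      rw [Finset.sum_congr rfl hterm]
      simp only [pow_zero, Nat.factorial_zero, Nat.cast_one, mul_one, div_one,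
        Nat.add_sub_cancel, Nat.sub_zero]
      rw [pow_succ (π : ℝ) s, pow_succ (-1 : ℝ) s]
      ring
    refine ⟨?_, ?_⟩
    · rw [step1, hlin, hFeq]
    · rw [← hFeq]
      exact integral_nonneg hg_nonneg

/-- for s' ≥ 1 and T ≥ 1, the Lebesgue volume of
{(y_1,…,y_{s'}) ∈ ℂ^{s'} : ∏ |y_j|² ≤ T, |y_j| ≥ 1 for all j} equals
π^{s'}((−1)^{s'} + Σ_{i=0}^{s'−1} (−1)^{s'−1−i} T (log T)^i / i!). -/
theorem statement8 (s' : ℕ) (hs' : 1 ≤ s') (T : ℝ) (hT : 1 ≤ T) :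
    (volume {y : Fin s' → ℂ |
        (∏ j, ‖(y j)‖ ^ 2) ≤ T ∧ ∀ j, 1 ≤ ‖(y j)‖}).toReal =
      π ^ s' * ((-1 : ℝ) ^ s' +
        ∑ i ∈ Finset.range s',
          (-1 : ℝ) ^ (s' - 1 - i) * T * (Real.log T) ^ i / (Nat.factorial i)) := by
  obtain ⟨h1, h2⟩ := main_lemma s' T hT
  show (volume (Sset s' T)).toReal = Fm s' T
  rw [h1, ENNReal.toReal_ofReal h2]
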